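/- On ℂ² ⊗ (ℂ²)^{⊗3}, define Ry(θ) := [[cos(θ/2), −sin(θ/2)], [sin(θ/2), cos(θ/2)]], and for a permutation c ∈ S₃ the controlled gate C-P(c) := |0⟩⟨0|⊗I₈ + |1⟩⟨1|⊗P₃(c). Set α = γ = −arctan(√2) and β = arccos(−1/3), and U := (Ry(γ)⊗I₈)·C-P((132))·(Ry(β)⊗I₈)·C-P((123))·(Ry(α)⊗I₈). Then (⟨0|⊗I₈)·U·(|0⟩⊗I₈) = Π₃, the projector onto the symmetric subspace of (ℂ²)^{⊗3}. (Proposition: simplified purification circuit for three noisy qubits.) -/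

import Mathlib

open Matrix Kronecker

/-- Permutation matrix on `(ℂ^d)^{⊗n}` permuting tensor factors. -/
noncomputable def permMat (n d : ℕ) (σ : Equiv.Perm (Fin n)) :
    Matrix (Fin n → Fin d) (Fin n → Fin d) ℂ :=
  Matrix.of fun v w => if v = w ∘ σ then 1 else 0

/-- Projector onto the symmetric subspace of `(ℂ^d)^{⊗n}`. -/
noncomputable def symProj (n d : ℕ) :
    Matrix (Fin n → Fin d) (Fin n → Fin d) ℂ :=
  ((n.factorial : ℂ)⁻¹) • ∑ σ : Equiv.Perm (Fin n), permMat n d σ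

/-- The rotation gate `Ry(θ) = [[cos(θ/2), −sin(θ/2)], [sin(θ/2), cos(θ/2)]]`. -/
noncomputable def Ry (θ : ℝ) : Matrix (Fin 2) (Fin 2) ℂ :=
  !![((Real.cos (θ / 2) : ℝ) : ℂ), -((Real.sin (θ / 2) : ℝ) : ℂ);
     ((Real.sin (θ / 2) : ℝ) : ℂ), ((Real.cos (θ / 2) : ℝ) : ℂ)]

/-- The controlled-permutation gate `C-P(c) = |0⟩⟨0|⊗I₈ + |1⟩⟨1|⊗P₃(c)`
on `ℂ² ⊗ (ℂ²)^{⊗3}`. -/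
noncomputable def CP (c : Equiv.Perm (Fin 3)) :
    Matrix (Fin 2 × (Fin 3 → Fin 2)) (Fin 2 × (Fin 3 → Fin 2)) ℂ :=
  (Matrix.single (0 : Fin 2) (0 : Fin 2) (1 : ℂ)) ⊗ₖ
      (1 : Matrix (Fin 3 → Fin 2) (Fin 3 → Fin 2) ℂ)
    + (Matrix.single (1 : Fin 2) (1 : Fin 2) (1 : ℂ)) ⊗ₖ permMat 3 2 c

/-- The three-cycle `(123)` of `S₃` (zero-indexed: `0 → 1 → 2 → 0`). -/
def c123 : Equiv.Perm (Fin 3) := finRotate 3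

/-- The three-cycle `(132)` of `S₃` (zero-indexed: `0 → 2 → 1 → 0`). -/
def c132 : Equiv.Perm (Fin 3) := (finRotate 3)⁻¹

/-! ### Auxiliary lemmas -/

lemma permMat_one' (n d : ℕ) : permMat n d 1 = 1 := by
  ext v w
  simp [permMat, Matrix.one_apply, Function.comp]

lemma permMat_mul' (n d : ℕ) (σ τ : Equiv.Perm (Fin n)) :
    permMat n d σ * permMat n d τ = permMat n d (τ * σ) := by
  ext v w
  classical
  simp only [permMat, Matrix.mul_apply, Matrix.of_apply]
  rw [Finset.sum_eq_single (w ∘ τ)]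
  · simp [Function.comp_assoc]
    congr
  · intro b _ hb
    simp [if_neg hb]
  · simp

lemma perm_hc : permMat 3 2 c132 * permMat 3 2 c123 = 1 := by
  rw [permMat_mul']
  have : c123 * c132 = 1 := by decide
  rw [this, permMat_one']

lemma key_count : ∀ v w : Fin 3 → Fin 2,
    (∑ σ : Equiv.Perm (Fin 3), if v = w ∘ σ then (1:ℕ) else 0) =
      2 * ((if v = w then 1 else 0) + (if v = w ∘ c123 then 1 else 0)
        + (if v = w ∘ c132 then 1 else 0)) := by decide

lemma symProj_eq :
    symProj 3 2 = ((3:ℂ)⁻¹) • (1 + permMat 3 2 c123 + permMat 3 2 c132) := by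
  ext v w
  have h := key_count v w
  simp only [symProj, permMat, Matrix.smul_apply, Matrix.sum_apply, Matrix.of_apply,
    Matrix.add_apply, Matrix.one_apply, smul_eq_mul]
  have hcast : (∑ σ : Equiv.Perm (Fin 3), if v = w ∘ σ then (1:ℂ) else 0) =
      ((∑ σ : Equiv.Perm (Fin 3), if v = w ∘ σ then (1:ℕ) else 0 : ℕ) : ℂ) := by
    push_cast [apply_ite]
    rfl
  rw [hcast, h]
  push_cast [Nat.factorial]
  split_ifs <;> norm_num

noncomputable def al : ℝ := -Real.arctan (Real.sqrt 2)
noncomputable def be : ℝ := Real.arccos (-(1 / 3))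

lemma aux_h2 : Real.sqrt 2 * Real.sqrt 2 = 2 := Real.mul_self_sqrt (by norm_num)
lemma aux_h3 : Real.sqrt 3 * Real.sqrt 3 = 3 := Real.mul_self_sqrt (by norm_num)
lemma aux_h3pos : (0:ℝ) < Real.sqrt 3 := Real.sqrt_pos.mpr (by norm_num)

lemma hcosal : Real.cos al = (Real.sqrt 3)⁻¹ := by
  rw [al, Real.cos_neg, Real.cos_arctan]
  rw [Real.sq_sqrt (by norm_num : (0:ℝ) ≤ 2)]
  norm_num

lemma hsinal : Real.sin al = -(Real.sqrt 2 / Real.sqrt 3) := by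
  rw [al, Real.sin_neg, Real.sin_arctan]
  rw [Real.sq_sqrt (by norm_num : (0:ℝ) ≤ 2)]
  norm_num

lemma hcosbe : Real.cos be = -(1/3) := Real.cos_arccos (by norm_num) (by norm_num)

lemma hbe0 : (0:ℝ) ≤ be := Real.arccos_nonneg _
lemma hbepi : be ≤ Real.pi := Real.arccos_le_pi _

lemma hcb : Real.cos (be / 2) = (Real.sqrt 3)⁻¹ := by
  rw [Real.cos_half (by linarith [hbe0, Real.pi_pos] : -Real.pi ≤ be) hbepi, hcosbe]
  rw [show (1 + -(1/3))/2 = (3:ℝ)⁻¹ by norm_num, Real.sqrt_inv]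

lemma hsb : Real.sin (be / 2) = Real.sqrt 2 / Real.sqrt 3 := by
  rw [Real.sin_half_eq_sqrt hbe0 (by linarith [hbepi, Real.pi_pos] : be ≤ 2 * Real.pi), hcosbe]
  rw [show (1 - -(1/3))/2 = (2:ℝ)/3 by norm_num, Real.sqrt_div (by norm_num : (0:ℝ) ≤ 2)]

lemma R1 : Real.cos (al/2) * (Real.cos (be/2) * Real.cos (al/2))
    - Real.sin (al/2) * (Real.cos (be/2) * Real.sin (al/2)) = 3⁻¹ := by
  have key : Real.cos (al/2)^2 - Real.sin (al/2)^2 = Real.cos al := by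
    rw [← Real.cos_two_mul']; ring_nf
  have h : Real.cos (al/2) * (Real.cos (be/2) * Real.cos (al/2))
      - Real.sin (al/2) * (Real.cos (be/2) * Real.sin (al/2))
      = (Real.cos (al/2)^2 - Real.sin (al/2)^2) * Real.cos (be/2) := by ring
  rw [h, key, hcosal, hcb, ← mul_inv, aux_h3]

lemma R2 : -(Real.cos (al/2) * (Real.sin (be/2) * Real.sin (al/2))) = 3⁻¹ := by
  have key : Real.sin (al/2) * Real.cos (al/2) = Real.sin al / 2 := by
    rw [show al = 2 * (al/2) by ring, Real.sin_two_mul]; ring_nf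
  have h : -(Real.cos (al/2) * (Real.sin (be/2) * Real.sin (al/2)))
      = -(Real.sin (al/2) * Real.cos (al/2)) * Real.sin (be/2) := by ring
  rw [h, key, hsinal, hsb]
  field_simp
  nlinarith [aux_h2, aux_h3, aux_h3pos]

notation "E0" => Matrix.single (0 : Fin 2) (0 : Fin 2) (1 : ℂ)
notation "E1" => Matrix.single (1 : Fin 2) (1 : Fin 2) (1 : ℂ)
notation "I8" => (1 : Matrix (Fin 3 → Fin 2) (Fin 3 → Fin 2) ℂ)

lemma cast1 : ((al:ℂ))/2 = ((al/2:ℝ):ℂ) := by push_cast; ring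
lemma cast2 : ((be:ℂ))/2 = ((be/2:ℝ):ℂ) := by push_cast; ring

lemma C1 : (Ry al * (E0 * (Ry be * (E0 * Ry al)))) 0 0
    + (Ry al * (E1 * (Ry be * (E1 * Ry al)))) 0 0 = (3:ℂ)⁻¹ := by
  simp [Matrix.mul_apply, Fin.sum_univ_two, Ry, Matrix.single, Matrix.vecMul,
    dotProduct, Matrix.of_apply, Matrix.cons_val_zero, Matrix.cons_val_one,
    Matrix.vecHead, Matrix.vecTail]
  simp only [cast1, cast2, ← Complex.ofReal_cos, ← Complex.ofReal_sin]
  have h : Real.cos (al/2) * (Real.cos (be/2) * Real.cos (al/2))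
      + -(Real.sin (al/2) * (Real.cos (be/2) * Real.sin (al/2))) = 3⁻¹ := by
    linarith [R1]
  norm_cast
  rw [h]
  norm_num

lemma C2 : (Ry al * (E0 * (Ry be * (E1 * Ry al)))) 0 0 = (3:ℂ)⁻¹ := by
  simp [Matrix.mul_apply, Fin.sum_univ_two, Ry, Matrix.single, Matrix.vecMul,
    dotProduct, Matrix.of_apply, Matrix.cons_val_zero, Matrix.cons_val_one,
    Matrix.vecHead, Matrix.vecTail]
  simp only [cast1, cast2, ← Complex.ofReal_cos, ← Complex.ofReal_sin]
  norm_cast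
  rw [R2]
  norm_num

lemma C3 : (Ry al * (E1 * (Ry be * (E0 * Ry al)))) 0 0 = (3:ℂ)⁻¹ := by
  simp [Matrix.mul_apply, Fin.sum_univ_two, Ry, Matrix.single, Matrix.vecMul,
    dotProduct, Matrix.of_apply, Matrix.cons_val_zero, Matrix.cons_val_one,
    Matrix.vecHead, Matrix.vecTail]
  simp only [cast1, cast2, ← Complex.ofReal_cos, ← Complex.ofReal_sin]
  have h : -(Real.sin (al/2) * (Real.sin (be/2) * Real.cos (al/2))) = 3⁻¹ := by
    rw [← R2]; ring
  norm_cast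
  rw [h]
  norm_num

lemma hU : (Ry al ⊗ₖ I8) * CP c132 * (Ry be ⊗ₖ I8) * CP c123 * (Ry al ⊗ₖ I8)
    = (Ry al * E0 * Ry be * E0 * Ry al) ⊗ₖ I8
    + (Ry al * E0 * Ry be * E1 * Ry al) ⊗ₖ permMat 3 2 c123
    + (Ry al * E1 * Ry be * E0 * Ry al) ⊗ₖ permMat 3 2 c132
    + (Ry al * E1 * Ry be * E1 * Ry al) ⊗ₖ I8 := by
  simp only [CP, Matrix.add_mul, Matrix.mul_add, ← Matrix.mul_kronecker_mul,
    Matrix.one_mul, Matrix.mul_one, perm_hc, Matrix.mul_assoc]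
  abel

/-- simplified purification circuit for three noisy qubits.
With `α = γ = −arctan √2`, `β = arccos(−1/3)` and
`U = (Ry(γ)⊗I₈)·C-P((132))·(Ry(β)⊗I₈)·C-P((123))·(Ry(α)⊗I₈)`,
the top-left ancilla block `(⟨0|⊗I₈)·U·(|0⟩⊗I₈)` equals `Π₃`. -/
theorem stmt12 :
    (Matrix.of fun v w : Fin 3 → Fin 2 =>
       ((Ry (-Real.arctan (Real.sqrt 2)) ⊗ₖ (1 : Matrix (Fin 3 → Fin 2) (Fin 3 → Fin 2) ℂ)) *
          CP c132 *
          (Ry (Real.arccos (-(1 / 3))) ⊗ₖ (1 : Matrix (Fin 3 → Fin 2) (Fin 3 → Fin 2) ℂ)) *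
          CP c123 *
          (Ry (-Real.arctan (Real.sqrt 2)) ⊗ₖ (1 : Matrix (Fin 3 → Fin 2) (Fin 3 → Fin 2) ℂ)))
         ((0 : Fin 2), v) ((0 : Fin 2), w))
      = symProj 3 2 := by
  have hal : -Real.arctan (Real.sqrt 2) = al := rfl
  have hbe : Real.arccos (-(1 / 3)) = be := rfl
  rw [hal, hbe, symProj_eq]
  ext v w
  rw [Matrix.of_apply, hU]
  simp only [Matrix.add_apply, Matrix.kroneckerMap_apply, Matrix.smul_apply,
    Matrix.one_apply, smul_eq_mul, permMat, Matrix.of_apply, Matrix.mul_assoc]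
  have c1 := C1
  have c2 := C2
  have c3 := C3
  linear_combination (if v = w then (1:ℂ) else 0) * c1
    + (if v = w ∘ c123 then (1:ℂ) else 0) * c2
    + (if v = w ∘ c132 then (1:ℂ) else 0) * c3
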